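/- Let x* ≠ 0 be a global minimizer of E(x) = ‖x‖₁ - α‖x‖₂ + l(x), where l has L-Lipschitz gradient, α > 0, and ‖x*‖₂ < α/L. Then x* is 1-sparse, and for its nonzero component i, ∇_i l(x*) = (α - 1)·sign(x*_i). -/

import Mathlib

open Finset Filter Set
open scoped RealInnerProductSpace

noncomputable def norm1 {N : ℕ} (x : EuclideanSpace ℝ (Fin N)) : ℝ := ∑ i, |x i|

noncomputable def normInf {N : ℕ} (x : EuclideanSpace ℝ (Fin N)) : ℝ := ⨆ i, |x i|

noncomputable def Fobj {N : ℕ} (a lam : ℝ) (y x : EuclideanSpace ℝ (Fin N)) : ℝ :=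
  norm1 x - a * ‖x‖ + 1 / (2 * lam) * ‖x - y‖ ^ 2

lemma norm1_single {N : ℕ} (i : Fin N) (c : ℝ) :
    norm1 (EuclideanSpace.single i c) = |c| := by
  simp [norm1, EuclideanSpace.single_apply, apply_ite (|·|)]


lemma abs2 (u v : ℝ) (h : |v| ≤ |u|) : |u + v| + |u - v| = 2 * |u| := by
  rcases abs_le.mp h with ⟨h1, h2⟩
  rcases le_total 0 u with hu | hu
  · rw [abs_of_nonneg hu] at h1 h2
    rw [abs_of_nonneg (by linarith), abs_of_nonneg (by linarith), abs_of_nonneg hu]; ring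
  · rw [abs_of_nonpos hu] at h1 h2
    rw [abs_of_nonpos (by linarith), abs_of_nonpos (by linarith), abs_of_nonpos hu]; ring

lemma descent {N : ℕ} (L : ℝ) (hL : 0 < L)
    (l : EuclideanSpace ℝ (Fin N) → ℝ)
    (g : EuclideanSpace ℝ (Fin N) → EuclideanSpace ℝ (Fin N))
    (hg : ∀ z, HasGradientAt l (g z) z)
    (hLip : ∀ z w, ‖g z - g w‖ ≤ L * ‖z - w‖)
    (x d : EuclideanSpace ℝ (Fin N)) :
    l (x + d) ≤ l x + ⟪g x, d⟫ + L / 2 * ‖d‖ ^ 2 := by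
  set F : ℝ → ℝ := fun t => l (x + t • d) - t * ⟪g x, d⟫ - L / 2 * ‖d‖ ^ 2 * t ^ 2 with hF
  have hder : ∀ t : ℝ, HasDerivAt F
      (⟪g (x + t • d), d⟫ - ⟪g x, d⟫ - L * ‖d‖ ^ 2 * t) t := by
    intro t
    have hpath : HasDerivAt (fun s : ℝ => x + s • d) d t := by
      simpa using ((hasDerivAt_id t).smul_const d).const_add x
    have hcomp : HasDerivAt (fun s : ℝ => l (x + s • d)) ⟪g (x + t • d), d⟫ t := by
      have := ((hg (x + t • d)).hasFDerivAt).comp_hasDerivAt t hpath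
      simpa [InnerProductSpace.toDual_apply_apply, Function.comp_def] using this
    have h2 : HasDerivAt (fun s : ℝ => s * ⟪g x, d⟫) ⟪g x, d⟫ t := by
      simpa using (hasDerivAt_id t).mul_const ⟪g x, d⟫
    have h3 : HasDerivAt (fun s : ℝ => L / 2 * ‖d‖ ^ 2 * s ^ 2)
        (L * ‖d‖ ^ 2 * t) t := by
      have := (hasDerivAt_pow 2 t).const_mul (L / 2 * ‖d‖ ^ 2)
      exact this.congr_deriv (by push_cast; ring_nf)
    exact (hcomp.sub h2).sub h3
  have hanti : AntitoneOn F (Icc 0 1) := by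
    apply antitoneOn_of_deriv_nonpos (convex_Icc 0 1)
    · exact fun t _ => ((hder t).continuousAt).continuousWithinAt
    · intro t ht
      exact ((hder t).differentiableAt).differentiableWithinAt
    · intro t ht
      rw [interior_Icc] at ht
      rw [(hder t).deriv]
      have h1 : ⟪g (x + t • d) - g x, d⟫ ≤ ‖g (x + t • d) - g x‖ * ‖d‖ :=
        real_inner_le_norm _ _
      have h2 : ‖g (x + t • d) - g x‖ ≤ L * (t * ‖d‖) := by
        have := hLip (x + t • d) x
        simpa [norm_smul, abs_of_pos ht.1] using this
      have := inner_sub_left (𝕜 := ℝ) (g (x + t • d)) (g x) d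
      nlinarith [norm_nonneg d, ht.1.le]
  have := hanti (Set.left_mem_Icc.2 zero_le_one) (Set.right_mem_Icc.2 zero_le_one) zero_le_one
  simp only [hF, one_smul, zero_smul, add_zero, one_mul, zero_mul, sub_zero,
    one_pow, mul_one, zero_pow, mul_zero] at this
  linarith

set_option maxHeartbeats 2000000 in
lemma two_nonzero_contra {N : ℕ} (a L : ℝ) (ha : 0 < a) (hL : 0 < L)
    (l : EuclideanSpace ℝ (Fin N) → ℝ)
    (g : EuclideanSpace ℝ (Fin N) → EuclideanSpace ℝ (Fin N))
    (hg : ∀ z, HasGradientAt l (g z) z)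
    (hLip : ∀ z w, ‖g z - g w‖ ≤ L * ‖z - w‖)
    (xs : EuclideanSpace ℝ (Fin N)) (hsmall : ‖xs‖ < a / L)
    (hmin : ∀ z, norm1 xs - a * ‖xs‖ + l xs ≤ norm1 z - a * ‖z‖ + l z)
    (i j : Fin N) (hij : i ≠ j) (hi : xs i ≠ 0) (hj : xs j ≠ 0) : False := by
  have hxs : xs ≠ 0 := fun h => hi (by simp [h])
  have hn : 0 < ‖xs‖ := norm_pos_iff.2 hxs
  set d : EuclideanSpace ℝ (Fin N) :=
    EuclideanSpace.single i (xs j) - EuclideanSpace.single j (xs i) with hd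
  have hdi : d i = xs j := by
    simp [hd, EuclideanSpace.single_apply, hij, Ne.symm hij]
  have hdj : d j = -xs i := by
    simp [hd, EuclideanSpace.single_apply, hij, Ne.symm hij]
  have hdk : ∀ k, k ≠ i → k ≠ j → d k = 0 := by
    intro k hk1 hk2
    simp [hd, EuclideanSpace.single_apply, hk1, hk2]
  have hinner : ⟪xs, d⟫ = 0 := by
    rw [hd, inner_sub_right]
    simp [EuclideanSpace.inner_single_right]
    ring
  have hdsq : ‖d‖ ^ 2 = (xs j) ^ 2 + (xs i) ^ 2 := by
    rw [← real_inner_self_eq_norm_sq, hd]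
    simp only [inner_sub_left, inner_sub_right, EuclideanSpace.inner_single_right,
      EuclideanSpace.inner_single_left, conj_trivial, EuclideanSpace.single_apply]
    simp [hij, Ne.symm hij]
    ring
  have hd2pos : 0 < ‖d‖ ^ 2 := by
    rw [hdsq]
    nlinarith [sq_abs (xs i), pow_pos (abs_pos.2 hi) 2, sq_nonneg (xs j)]
  obtain ⟨R, hR, hRpos, hReq⟩ : ∃ R : ℝ, ‖xs‖ < R ∧ 0 < R ∧ L * (R + ‖xs‖) = 2 * a := by
    refine ⟨2 * a / L - ‖xs‖, ?_, ?_, by field_simp; ring⟩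
    · have := (lt_div_iff₀ hL).mp hsmall
      rw [sub_eq_add_neg, lt_add_neg_iff_add_lt, div_eq_mul_inv, ← lt_div_iff₀ hL] at *
      nlinarith [mul_pos hL hn]
    · have h1 : a / L ≤ 2 * a / L - a / L := by ring_nf; nlinarith [mul_pos ha (inv_pos.2 hL)]
      nlinarith [hsmall, div_pos ha hL]
  clear hd
  clear_value d
  obtain ⟨t, htpos, ht1, ht2, htlt⟩ : ∃ t : ℝ, 0 < t ∧ t * |xs j| ≤ |xs i| ∧
      t * |xs i| ≤ |xs j| ∧ t ^ 2 * ‖d‖ ^ 2 < R ^ 2 - ‖xs‖ ^ 2 := by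
    have hnum : 0 < R ^ 2 - ‖xs‖ ^ 2 := by nlinarith [norm_nonneg xs]
    obtain ⟨c, hcpos, hc2⟩ : ∃ c : ℝ, 0 < c ∧ c ^ 2 * ‖d‖ ^ 2 = R ^ 2 - ‖xs‖ ^ 2 := by
      refine ⟨Real.sqrt ((R ^ 2 - ‖xs‖ ^ 2) / ‖d‖ ^ 2),
        Real.sqrt_pos.2 (div_pos hnum hd2pos), ?_⟩
      rw [Real.sq_sqrt (le_of_lt (div_pos hnum hd2pos))]
      exact div_mul_cancel₀ _ hd2pos.ne'
    have hSpos : 0 < |xs i| + |xs j| := add_pos (abs_pos.2 hi) (abs_pos.2 hj)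
    set S := |xs i| + |xs j| with hS
    refine ⟨min (min (|xs i| / S) (|xs j| / S)) (c / 2), ?_, ?_, ?_, ?_⟩
    · exact lt_min (lt_min (div_pos (abs_pos.2 hi) hSpos) (div_pos (abs_pos.2 hj) hSpos))
        (by linarith)
    · calc min (min (|xs i| / S) (|xs j| / S)) (c / 2) * |xs j|
          ≤ |xs i| / S * |xs j| :=
            mul_le_mul_of_nonneg_right (le_trans (min_le_left _ _) (min_le_left _ _))
              (abs_nonneg _)
        _ ≤ |xs i| / S * S := by
            apply mul_le_mul_of_nonneg_left _ (by positivity)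
            nlinarith [abs_nonneg (xs i)]
        _ = |xs i| := div_mul_cancel₀ _ hSpos.ne'
    · calc min (min (|xs i| / S) (|xs j| / S)) (c / 2) * |xs i|
          ≤ |xs j| / S * |xs i| :=
            mul_le_mul_of_nonneg_right (le_trans (min_le_left _ _) (min_le_right _ _))
              (abs_nonneg _)
        _ ≤ |xs j| / S * S := by
            apply mul_le_mul_of_nonneg_left _ (by positivity)
            nlinarith [abs_nonneg (xs j)]
        _ = |xs j| := div_mul_cancel₀ _ hSpos.ne'
    · set m := min (min (|xs i| / S) (|xs j| / S)) (c / 2) with hm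
      have htc : m ≤ c / 2 := min_le_right _ _
      have h0 : 0 < m :=
        lt_min (lt_min (div_pos (abs_pos.2 hi) hSpos) (div_pos (abs_pos.2 hj) hSpos))
          (by linarith)
      clear_value m
      have h1 : m ^ 2 ≤ (c / 2) ^ 2 := by nlinarith
      have h2 : m ^ 2 * ‖d‖ ^ 2 ≤ (c / 2) ^ 2 * ‖d‖ ^ 2 :=
        mul_le_mul_of_nonneg_right h1 (le_of_lt hd2pos)
      have h3 : (c / 2) ^ 2 * ‖d‖ ^ 2 < c ^ 2 * ‖d‖ ^ 2 := by
        nlinarith [mul_pos (mul_pos hcpos hcpos) hd2pos]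
      linarith
  have hplus : ‖xs + t • d‖ ^ 2 = ‖xs‖ ^ 2 + t ^ 2 * ‖d‖ ^ 2 := by
    rw [norm_add_sq_real, real_inner_smul_right, hinner, norm_smul]
    simp [mul_pow, sq_abs]
  have hminus : ‖xs - t • d‖ ^ 2 = ‖xs‖ ^ 2 + t ^ 2 * ‖d‖ ^ 2 := by
    rw [norm_sub_sq_real, real_inner_smul_right, hinner, norm_smul]
    simp [mul_pow, sq_abs]
  have hrr : ‖xs - t • d‖ = ‖xs + t • d‖ := by
    rw [← Real.sqrt_sq (norm_nonneg (xs - t • d)), ← Real.sqrt_sq (norm_nonneg (xs + t • d)),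
      hplus, hminus]
  have hrpos : 0 < ‖xs + t • d‖ := by
    nlinarith [norm_nonneg (xs + t • d), hplus, hn]
  have hrR : ‖xs + t • d‖ < R := by
    have h7 : ‖xs + t • d‖ ^ 2 < R ^ 2 := by nlinarith
    nlinarith [norm_nonneg (xs + t • d)]
  have h1sum : norm1 (xs + t • d) + norm1 (xs - t • d) = 2 * norm1 xs := by
    simp only [norm1, ← Finset.sum_add_distrib, Finset.mul_sum]
    apply Finset.sum_congr rfl
    intro k _
    have e1 : (xs + t • d) k = xs k + t * d k := rfl
    have e2 : (xs - t • d) k = xs k - t * d k := rfl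
    rw [e1, e2]
    by_cases hk1 : k = i
    · subst hk1
      rw [hdi]
      apply abs2
      rw [abs_mul, abs_of_pos htpos]
      exact ht1
    · by_cases hk2 : k = j
      · subst hk2
        rw [hdj]
        apply abs2
        rw [abs_mul, abs_neg, abs_of_pos htpos]
        exact ht2
      · rw [hdk k hk1 hk2]
        simp only [mul_zero, add_zero, sub_zero]
        ring
  have hub1 := descent L hL l g hg hLip xs (t • d)
  have hub2 := descent L hL l g hg hLip xs (-(t • d))
  rw [← sub_eq_add_neg, inner_neg_right, norm_neg] at hub2
  have hts : ‖t • d‖ ^ 2 = t ^ 2 * ‖d‖ ^ 2 := by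
    rw [norm_smul]; simp [mul_pow, sq_abs]
  have hm1 := hmin (xs + t • d)
  have hm2 := hmin (xs - t • d)
  rw [hrr] at hm2
  have key : 2 * a * (‖xs + t • d‖ - ‖xs‖) ≤ L * (t ^ 2 * ‖d‖ ^ 2) := by
    have e1 : l (xs + t • d) + l (xs - t • d) ≤ 2 * l xs + L * (t ^ 2 * ‖d‖ ^ 2) := by
      rw [hts] at hub1 hub2
      linarith
    linarith [hm1, hm2, h1sum, hrr, e1]
  have hr_id : ‖xs + t • d‖ ^ 2 - ‖xs‖ ^ 2 = t ^ 2 * ‖d‖ ^ 2 := by linarith [hplus]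
  have hgt : ‖xs‖ < ‖xs + t • d‖ := by
    nlinarith [hr_id, mul_pos (pow_pos htpos 2) hd2pos, hn, hrpos]
  rw [← hr_id] at key
  have h2a : 2 * a ≤ L * (‖xs + t • d‖ + ‖xs‖) := by
    nlinarith [key, hgt]
  have hfin : L * (‖xs + t • d‖ + ‖xs‖) < 2 * a := by
    have h5 : ‖xs + t • d‖ + ‖xs‖ < R + ‖xs‖ := by linarith
    nlinarith [hReq, h5, hL]
  linarith

set_option maxHeartbeats 1000000 in
lemma grad_eq {N : ℕ} (a L : ℝ) (ha : 0 < a) (hL : 0 < L)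
    (l : EuclideanSpace ℝ (Fin N) → ℝ)
    (g : EuclideanSpace ℝ (Fin N) → EuclideanSpace ℝ (Fin N))
    (hg : ∀ z, HasGradientAt l (g z) z)
    (hLip : ∀ z w, ‖g z - g w‖ ≤ L * ‖z - w‖)
    (xs : EuclideanSpace ℝ (Fin N))
    (hmin : ∀ z, norm1 xs - a * ‖xs‖ + l xs ≤ norm1 z - a * ‖z‖ + l z)
    (i : Fin N) (hi : xs i ≠ 0) (hone : ∀ k, k ≠ i → xs k = 0) :
    g xs i = (a - 1) * Real.sign (xs i) := by
  set s := Real.sign (xs i) with hs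
  have hspm : s = -1 ∨ s = 1 := Real.sign_apply_eq_of_ne_zero _ hi
  have hs2 : s * s = 1 := by rcases hspm with h | h <;> rw [h] <;> norm_num
  have habs1 : |s| = 1 := by rcases hspm with h | h <;> rw [h] <;> norm_num
  have hsabs : s * |xs i| = xs i := by
    rcases lt_or_gt_of_ne hi with h | h
    · rw [hs, Real.sign_of_neg h, abs_of_neg h]; ring
    · rw [hs, Real.sign_of_pos h, abs_of_pos h]; ring
  have hm : 0 < |xs i| := abs_pos.2 hi
  have hxs_eq : xs = EuclideanSpace.single i (xs i) := by
    ext k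
    by_cases hk : k = i
    · subst hk; simp [EuclideanSpace.single_apply]
    · simp [EuclideanSpace.single_apply, hk, hone k hk]
  have hnxs : ‖xs‖ = |xs i| := by
    conv_lhs => rw [hxs_eq]
    rw [EuclideanSpace.norm_single, Real.norm_eq_abs]
  have hn1xs : norm1 xs = |xs i| := by
    conv_lhs => rw [hxs_eq]
    exact norm1_single i (xs i)
  have key : ∀ t : ℝ, |t| ≤ |xs i| →
      0 ≤ (1 - a) * t + t * (s * g xs i) + L / 2 * t ^ 2 := by
    intro t ht
    have hzeq : xs + t • EuclideanSpace.single i s = EuclideanSpace.single i (xs i + t * s) := by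
      ext k
      have e1 : (xs + t • EuclideanSpace.single i s) k
          = xs k + t * (EuclideanSpace.single i s) k := rfl
      rw [e1]
      by_cases hk : k = i
      · subst hk; simp [EuclideanSpace.single_apply]
      · simp [EuclideanSpace.single_apply, hk, hone k hk]
    have habs : |xs i + t * s| = |xs i| + t := by
      have e : xs i + t * s = s * (|xs i| + t) := by
        rw [mul_add, hsabs]; ring
      rw [e, abs_mul, habs1, one_mul]
      exact abs_of_nonneg (by rcases abs_le.mp ht with ⟨h1, h2⟩; linarith)
    have hz := hmin (xs + t • EuclideanSpace.single i s)
    rw [hzeq] at hz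
    rw [norm1_single, EuclideanSpace.norm_single, Real.norm_eq_abs, habs, hn1xs, hnxs] at hz
    have hub := descent L hL l g hg hLip xs (t • EuclideanSpace.single i s)
    rw [hzeq] at hub
    have hinner : ⟪g xs, t • EuclideanSpace.single i s⟫ = t * (s * g xs i) := by
      rw [real_inner_smul_right, EuclideanSpace.inner_single_right]
      simp [mul_comm]
    have hnorm : ‖t • EuclideanSpace.single i s‖ ^ 2 = t ^ 2 := by
      rw [norm_smul, EuclideanSpace.norm_single, Real.norm_eq_abs, Real.norm_eq_abs,
        habs1, mul_one, sq_abs]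
    rw [hinner, hnorm] at hub
    nlinarith [hz, hub]
  have hceq : (1 - a) + s * g xs i = 0 := by
    by_contra hc
    rcases lt_or_gt_of_ne hc with hneg | hpos
    · set c := (1 - a) + s * g xs i with hcdef
      have hcneg : c < 0 := hneg
      set t : ℝ := min (|xs i|) (-c / L) with htdef
      have htpos : 0 < t := lt_min hm (div_pos (by linarith) hL)
      have h1 := key t (by rw [abs_of_pos htpos]; exact min_le_left _ _)
      have h5 : t * L ≤ -c := (le_div_iff₀ hL).mp (min_le_right _ _)
      have h6 : 0 ≤ c * t + L / 2 * t ^ 2 := by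
        have : (1 - a) * t + t * (s * g xs i) = c * t := by rw [hcdef]; ring
        linarith [h1, this.symm.le, this.le]
      nlinarith [h6, h5, htpos, hcneg]
    · set c := (1 - a) + s * g xs i with hcdef
      have hcpos : 0 < c := hpos
      set t : ℝ := min (|xs i|) (c / L) with htdef
      have htpos : 0 < t := lt_min hm (div_pos hcpos hL)
      have h1 := key (-t) (by rw [abs_neg, abs_of_pos htpos]; exact min_le_left _ _)
      have h5 : t * L ≤ c := (le_div_iff₀ hL).mp (min_le_right _ _)
      have h6 : 0 ≤ -(c * t) + L / 2 * t ^ 2 := by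
        have e : (1 - a) * (-t) + (-t) * (s * g xs i) = -(c * t) := by rw [hcdef]; ring
        nlinarith [h1]
      nlinarith [h6, h5, htpos, hcpos]
  have h7 : s * g xs i = a - 1 := by linarith
  calc g xs i = (s * s) * g xs i := by rw [hs2, one_mul]
    _ = s * (s * g xs i) := by ring
    _ = s * (a - 1) := by rw [h7]
    _ = (a - 1) * s := by ring

theorem stmt13 {N : ℕ} (a L : ℝ) (ha : 0 < a) (hL : 0 < L)
    (l : EuclideanSpace ℝ (Fin N) → ℝ)
    (g : EuclideanSpace ℝ (Fin N) → EuclideanSpace ℝ (Fin N))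
    (hg : ∀ z, HasGradientAt l (g z) z)
    (hLip : ∀ z w, ‖g z - g w‖ ≤ L * ‖z - w‖)
    (xs : EuclideanSpace ℝ (Fin N)) (hxs : xs ≠ 0) (hsmall : ‖xs‖ < a / L)
    (hmin : ∀ z, norm1 xs - a * ‖xs‖ + l xs ≤ norm1 z - a * ‖z‖ + l z) :
    (∃! i, xs i ≠ 0) ∧ ∀ i, xs i ≠ 0 → g xs i = (a - 1) * Real.sign (xs i) := by
  obtain ⟨i0, hi0⟩ : ∃ i, xs i ≠ 0 := by
    by_contra h
    push_neg at h
    exact hxs (by ext k; simpa using h k)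
  have huniq : ∀ j, xs j ≠ 0 → j = i0 := by
    intro j hj
    by_contra hne
    exact two_nonzero_contra a L ha hL l g hg hLip xs hsmall hmin j i0 hne hj hi0
  refine ⟨⟨i0, hi0, huniq⟩, ?_⟩
  intro i hi
  have hone : ∀ k, k ≠ i → xs k = 0 := by
    intro k hk
    by_contra hknz
    exact hk ((huniq k hknz).trans (huniq i hi).symm)
  exact grad_eq a L ha hL l g hg hLip xs hmin i hi hone
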